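/- Let P_e and P_o be the even and odd parity projectors on L²(ℝ, ℂ), and let g(x) = sin(2πx) − 2πx·cos(2πx). Let k_e, k_o ∈ ℂ and set T = k_e·P_e + k_o·P_o. If for all Schwartz functions ψ, χ ∈ 𝒮(ℝ, ℂ) one has ⟨T(g·ψ), χ⟩ = ⟨Tψ, g·χ⟩, then k_e = k_o, and hence T is a scalar multiple of the identity. -/

import Mathlib

noncomputable section

/-- The even parity projector `(P_e ψ)(x) = (ψ(x) + ψ(−x))/2`. -/
def Pe (ψ : ℝ → ℂ) : ℝ → ℂ := fun x => (ψ x + ψ (-x)) / 2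

/-- The odd parity projector `(P_o ψ)(x) = (ψ(x) − ψ(−x))/2`. -/
def Po (ψ : ℝ → ℂ) : ℝ → ℂ := fun x => (ψ x - ψ (-x)) / 2

/-- The real-valued function `g(x) = sin(2πx) − 2πx·cos(2πx)`, which is
`(A − A*)/(2i)` for `A = 𝒬₁(e^{2πix})`. -/
def gfun : ℝ → ℂ := fun x =>
  ((Real.sin (2 * Real.pi * x) - 2 * Real.pi * x * Real.cos (2 * Real.pi * x) : ℝ) : ℂ)

open Polynomial MeasureTheory Filter
open scoped ContDiff

local notation "π" => Real.pi

/-- One derivative step on the triple of polynomials. -/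
def pstep (t : ℝ[X] × ℝ[X] × ℝ[X]) : ℝ[X] × ℝ[X] × ℝ[X] :=
  (derivative t.1 - C (2*π) * t.2.1 - X * t.1,
   derivative t.2.1 + C (2*π) * t.1 - X * t.2.1,
   derivative t.2.2 - X * t.2.2)

/-- The real function associated to a triple. -/
def uu (t : ℝ[X] × ℝ[X] × ℝ[X]) (x : ℝ) : ℝ :=
  (t.1.eval x * Real.sin (2*π*x) + t.2.1.eval x * Real.cos (2*π*x) + t.2.2.eval x)
    * Real.exp (-(x^2/2))

lemma hasDerivAt_uu (t : ℝ[X] × ℝ[X] × ℝ[X]) (x : ℝ) :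
    HasDerivAt (uu t) (uu (pstep t) x) x := by
  have hs : HasDerivAt (fun x : ℝ => Real.sin (2*π*x)) (Real.cos (2*π*x) * (2*π)) x := by
    have h2 : HasDerivAt (fun x : ℝ => 2*π*x) (2*π) x := by
      simpa using (hasDerivAt_id x).const_mul (2*π)
    exact (Real.hasDerivAt_sin (2*π*x)).comp x h2
  have hc : HasDerivAt (fun x : ℝ => Real.cos (2*π*x)) (-Real.sin (2*π*x) * (2*π)) x := by
    have h2 : HasDerivAt (fun x : ℝ => 2*π*x) (2*π) x := by
      simpa using (hasDerivAt_id x).const_mul (2*π)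
    exact ((Real.hasDerivAt_cos (2*π*x)).comp x h2).congr_deriv (by ring)
  have he : HasDerivAt (fun x : ℝ => Real.exp (-(x^2/2))) (Real.exp (-(x^2/2)) * (-x)) x := by
    have h2 : HasDerivAt (fun x : ℝ => -(x^2/2)) (-x) x := by
      exact ((hasDerivAt_pow 2 x).div_const 2).neg.congr_deriv (by norm_num)
    exact (Real.hasDerivAt_exp (-(x^2/2))).comp x h2
  have h := ((((t.1.hasDerivAt x).mul hs).add ((t.2.1.hasDerivAt x).mul hc)).add
      (t.2.2.hasDerivAt x)).mul he
  refine h.congr_deriv ?_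
  simp only [uu, pstep, eval_sub, eval_add, eval_mul, eval_C, eval_X, derivative_mul,
    Pi.mul_apply, Pi.add_apply]
  ring

/-- The complex-valued version. -/
def uuC (t : ℝ[X] × ℝ[X] × ℝ[X]) : ℝ → ℂ := fun x => ((uu t x : ℝ) : ℂ)

lemma deriv_uuC (t : ℝ[X] × ℝ[X] × ℝ[X]) : deriv (uuC t) = uuC (pstep t) :=
  funext fun x => ((hasDerivAt_uu t x).ofReal_comp).deriv

lemma iteratedDeriv_uuC (n : ℕ) (t : ℝ[X] × ℝ[X] × ℝ[X]) :
    iteratedDeriv n (uuC t) = uuC (pstep^[n] t) := by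
  induction n generalizing t with
  | zero => simp
  | succ n ih =>
      rw [iteratedDeriv_succ', deriv_uuC, ih, ← Function.iterate_succ_apply]

lemma contDiff_poly (p : ℝ[X]) : ContDiff ℝ ∞ (fun x : ℝ => p.eval x) := by
  induction p using Polynomial.induction_on' with
  | add p q hp hq => simpa [Polynomial.eval_add] using hp.add hq
  | monomial n a =>
      simpa [Polynomial.eval_monomial] using (contDiff_const (c := a)).mul (contDiff_id.pow n)

lemma contDiff_uu (t : ℝ[X] × ℝ[X] × ℝ[X]) : ContDiff ℝ ∞ (uu t) := by
  have hlin : ContDiff ℝ ∞ (fun x : ℝ => 2*π*x) := contDiff_const.mul contDiff_id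
  have hs : ContDiff ℝ ∞ (fun x : ℝ => Real.sin (2*π*x)) := Real.contDiff_sin.comp hlin
  have hc : ContDiff ℝ ∞ (fun x : ℝ => Real.cos (2*π*x)) := Real.contDiff_cos.comp hlin
  have he : ContDiff ℝ ∞ (fun x : ℝ => Real.exp (-(x^2/2))) :=
    Real.contDiff_exp.comp (((contDiff_id.pow 2).div_const 2).neg)
  exact ((((contDiff_poly t.1).mul hs).add ((contDiff_poly t.2.1).mul hc)).add
    (contDiff_poly t.2.2)).mul he

lemma contDiff_uuC (t : ℝ[X] × ℝ[X] × ℝ[X]) : ContDiff ℝ ∞ (uuC t) :=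
  Complex.ofRealCLM.contDiff.comp (contDiff_uu t)

/-- Boundedness of `|x|^n e^{-x²/2}`. -/
lemma mono_bound (n : ℕ) : ∃ C : ℝ, ∀ x : ℝ, |x|^n * Real.exp (-(x^2/2)) ≤ C := by
  set f : ℝ → ℝ := fun x => |x|^n * Real.exp (-(x^2/2)) with hf
  have hcont : Continuous f :=
    (continuous_abs.pow n).mul (Real.continuous_exp.comp (by continuity))
  have htend : Tendsto f (Filter.cocompact ℝ) (nhds 0) := by
    have := tendsto_rpow_abs_mul_exp_neg_mul_sq_cocompact (by norm_num : (0:ℝ) < 1/2) n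
    refine this.congr fun x => ?_
    rw [Real.rpow_natCast]
    congr 1
    ring_nf
  set F : ZeroAtInftyContinuousMap ℝ ℝ := ⟨⟨f, hcont⟩, htend⟩ with hF
  obtain ⟨C, hC⟩ := ZeroAtInftyContinuousMap.bounded F
  refine ⟨C + |f 0|, fun x => ?_⟩
  have h1 := hC x 0
  have h2 : dist (f x) (f 0) = |f x - f 0| := Real.dist_eq _ _
  have h3 : f x ≤ |f x - f 0| + |f 0| := by
    have h4 : f x ≤ |f x| := le_abs_self _
    linarith [abs_nonneg (f x - f 0), abs_nonneg (f 0), abs_sub_abs_le_abs_sub (f x) (f 0),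
      abs_abs (f x)]
  calc f x ≤ |f x - f 0| + |f 0| := h3
    _ ≤ C + |f 0| := by
        have h5 : (F : ℝ → ℝ) x = f x := rfl
        have h6 : (F : ℝ → ℝ) 0 = f 0 := rfl
        rw [h5, h6, h2] at h1
        linarith

lemma poly_bound (k : ℕ) (p : ℝ[X]) :
    ∃ C : ℝ, ∀ x : ℝ, |x|^k * (|p.eval x| * Real.exp (-(x^2/2))) ≤ C := by
  choose Ci hCi using fun i : ℕ => mono_bound (k + i)
  refine ⟨∑ i ∈ Finset.range (p.natDegree + 1), |p.coeff i| * Ci i, fun x => ?_⟩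
  have hev : |p.eval x| ≤ ∑ i ∈ Finset.range (p.natDegree + 1), |p.coeff i| * |x|^i := by
    rw [Polynomial.eval_eq_sum_range]
    refine (Finset.abs_sum_le_sum_abs _ _).trans ?_
    refine Finset.sum_le_sum fun i _ => ?_
    rw [abs_mul, abs_pow]
  calc |x|^k * (|p.eval x| * Real.exp (-(x^2/2)))
      ≤ |x|^k * ((∑ i ∈ Finset.range (p.natDegree + 1), |p.coeff i| * |x|^i)
          * Real.exp (-(x^2/2))) := by
        have hx : (0:ℝ) ≤ |x|^k := pow_nonneg (abs_nonneg x) k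
        have := mul_le_mul_of_nonneg_right hev (Real.exp_pos (-(x^2/2))).le
        exact mul_le_mul_of_nonneg_left this hx
    _ = ∑ i ∈ Finset.range (p.natDegree + 1),
          |p.coeff i| * (|x|^(k+i) * Real.exp (-(x^2/2))) := by
        rw [Finset.sum_mul, Finset.mul_sum]
        refine Finset.sum_congr rfl fun i _ => ?_
        rw [pow_add]; ring
    _ ≤ ∑ i ∈ Finset.range (p.natDegree + 1), |p.coeff i| * Ci i := by
        refine Finset.sum_le_sum fun i _ => ?_
        exact mul_le_mul_of_nonneg_left (hCi i x) (abs_nonneg _)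

lemma uu_bound (k : ℕ) (t : ℝ[X] × ℝ[X] × ℝ[X]) :
    ∃ C : ℝ, ∀ x : ℝ, |x|^k * |uu t x| ≤ C := by
  obtain ⟨C1, h1⟩ := poly_bound k t.1
  obtain ⟨C2, h2⟩ := poly_bound k t.2.1
  obtain ⟨C3, h3⟩ := poly_bound k t.2.2
  refine ⟨C1 + C2 + C3, fun x => ?_⟩
  have hu : |uu t x| ≤ (|t.1.eval x| + |t.2.1.eval x| + |t.2.2.eval x|)
      * Real.exp (-(x^2/2)) := by
    rw [uu, abs_mul, Real.abs_exp]
    refine mul_le_mul_of_nonneg_right ?_ (Real.exp_pos _).le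
    refine (abs_add_le _ _).trans ?_
    have hsin : |t.1.eval x * Real.sin (2*π*x)| ≤ |t.1.eval x| := by
      rw [abs_mul]
      nlinarith [abs_nonneg (t.1.eval x), Real.abs_sin_le_one (2*π*x),
        abs_nonneg (Real.sin (2*π*x))]
    have hcos : |t.2.1.eval x * Real.cos (2*π*x)| ≤ |t.2.1.eval x| := by
      rw [abs_mul]
      nlinarith [abs_nonneg (t.2.1.eval x), Real.abs_cos_le_one (2*π*x),
        abs_nonneg (Real.cos (2*π*x))]
    have := abs_add_le (t.1.eval x * Real.sin (2*π*x)) (t.2.1.eval x * Real.cos (2*π*x))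
    linarith
  have hk : (0:ℝ) ≤ |x|^k := pow_nonneg (abs_nonneg x) k
  calc |x|^k * |uu t x|
      ≤ |x|^k * ((|t.1.eval x| + |t.2.1.eval x| + |t.2.2.eval x|) * Real.exp (-(x^2/2))) :=
        mul_le_mul_of_nonneg_left hu hk
    _ = |x|^k * (|t.1.eval x| * Real.exp (-(x^2/2)))
        + |x|^k * (|t.2.1.eval x| * Real.exp (-(x^2/2)))
        + |x|^k * (|t.2.2.eval x| * Real.exp (-(x^2/2))) := by ring
    _ ≤ C1 + C2 + C3 := by
        have := h1 x; have := h2 x; have := h3 x; linarith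

/-- The Schwartz map associated to a triple of polynomials. -/
def mkS (t : ℝ[X] × ℝ[X] × ℝ[X]) : SchwartzMap ℝ ℂ where
  toFun := uuC t
  smooth' := contDiff_uuC t
  decay' := by
    intro k n
    obtain ⟨C, hC⟩ := uu_bound k (pstep^[n] t)
    refine ⟨C, fun x => ?_⟩
    rw [norm_iteratedFDeriv_eq_norm_iteratedDeriv, iteratedDeriv_uuC]
    simpa [uuC, Real.norm_eq_abs, Complex.norm_real] using hC x

def t0 : ℝ[X] × ℝ[X] × ℝ[X] := (0, 0, 1)
def t1 : ℝ[X] × ℝ[X] × ℝ[X] := (1, -(C (2*π) * X), 0)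

def prf : ℝ → ℝ := uu t0
def crf : ℝ → ℝ := uu t1
def grf : ℝ → ℝ := fun x => Real.sin (2*π*x) - 2*π*x*Real.cos (2*π*x)

lemma hgc (x : ℝ) : grf x * prf x = crf x := by
  simp [grf, prf, crf, uu, t0, t1]; ring

lemma crf_odd (x : ℝ) : crf (-x) = -crf x := by
  simp [crf, uu, t1, mul_neg, Real.sin_neg, Real.cos_neg, neg_sq]; ring

lemma prf_even (x : ℝ) : prf (-x) = prf x := by
  simp [prf, uu, t0, neg_sq]

lemma coe_psiS : ⇑(mkS t0) = fun x => ((prf x : ℝ) : ℂ) := rfl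
lemma coe_chiS : ⇑(mkS t1) = fun x => ((crf x : ℝ) : ℂ) := rfl
lemma gfun_eq : gfun = fun x => ((grf x : ℝ) : ℂ) := rfl

lemma crf_quarter : crf (1/4) = Real.exp (-((1/4:ℝ)^2/2)) := by
  have h : 2*π*(1/4:ℝ) = π/2 := by ring
  simp only [crf, uu, t1, eval_one, eval_neg, eval_mul, eval_C, eval_X, eval_zero, h,
    Real.sin_pi_div_two, Real.cos_pi_div_two]
  ring

/-- If `T = k_e P_e + k_o P_o` weakly commutes with multiplication by
`g(x) = sin(2πx) − 2πx cos(2πx)` on Schwartz functions, then `k_e = k_o`, and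
hence `T` is a scalar multiple of the identity. -/
theorem parity_combination_scalar (ke ko : ℂ)
    (T : (ℝ → ℂ) → (ℝ → ℂ))
    (hT : T = fun ψ x => ke * Pe ψ x + ko * Po ψ x)
    (hcomm : ∀ ψ χ : SchwartzMap ℝ ℂ,
      (∫ x : ℝ, T (fun t => gfun t * ψ t) x * (starRingEnd ℂ) (χ x)) =
        ∫ x : ℝ, T ⇑ψ x * (starRingEnd ℂ) (gfun x * χ x)) :
    ke = ko ∧ ∀ ψ : ℝ → ℂ, T ψ = fun x => ke * ψ x := by
  subst hT
  have key := hcomm (mkS t0) (mkS t1)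
  have hmul : (fun t => gfun t * (mkS t0) t) = ⇑(mkS t1) := by
    funext x
    rw [coe_chiS, gfun_eq, coe_psiS]
    show ((grf x : ℝ) : ℂ) * ((prf x : ℝ) : ℂ) = ((crf x : ℝ) : ℂ)
    rw [← Complex.ofReal_mul, hgc]
  rw [hmul] at key
  have e1 : ∀ x : ℝ, (ke * Pe (⇑(mkS t1)) x + ko * Po (⇑(mkS t1)) x)
      * (starRingEnd ℂ) ((mkS t1) x) = ko * ((crf x ^ 2 : ℝ) : ℂ) := by
    intro x
    simp only [coe_chiS, Pe, Po, crf_odd x, Complex.conj_ofReal]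
    push_cast
    ring
  have e2 : ∀ x : ℝ, (ke * Pe (⇑(mkS t0)) x + ko * Po (⇑(mkS t0)) x)
      * (starRingEnd ℂ) (gfun x * (mkS t1) x) = ke * ((crf x ^ 2 : ℝ) : ℂ) := by
    intro x
    have h2 : gfun x * (mkS t1) x = ((grf x * crf x : ℝ) : ℂ) := by
      rw [gfun_eq, coe_chiS]
      show ((grf x : ℝ) : ℂ) * ((crf x : ℝ) : ℂ) = _
      rw [← Complex.ofReal_mul]
    have h3 : crf x ^ 2 = prf x * (grf x * crf x) := by rw [← hgc x]; ring
    simp only [coe_psiS, Pe, Po, prf_even x, h2, Complex.conj_ofReal, h3]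
    push_cast
    ring
  have keyL : (∫ x : ℝ, (ke * Pe (⇑(mkS t1)) x + ko * Po (⇑(mkS t1)) x)
      * (starRingEnd ℂ) ((mkS t1) x)) = ko * (((∫ x : ℝ, crf x ^ 2) : ℝ) : ℂ) := by
    rw [integral_congr_ae (Filter.Eventually.of_forall e1), integral_const_mul]
    congr 1
    exact integral_ofReal (𝕜 := ℂ)
  have keyR : (∫ x : ℝ, (ke * Pe (⇑(mkS t0)) x + ko * Po (⇑(mkS t0)) x)
      * (starRingEnd ℂ) (gfun x * (mkS t1) x)) = ke * (((∫ x : ℝ, crf x ^ 2) : ℝ) : ℂ) := by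
    rw [integral_congr_ae (Filter.Eventually.of_forall e2), integral_const_mul]
    congr 1
    exact integral_ofReal (𝕜 := ℂ)
  have keyc : ko * (((∫ x : ℝ, crf x ^ 2) : ℝ) : ℂ) = ke * (((∫ x : ℝ, crf x ^ 2) : ℝ) : ℂ) := by
    rw [← keyL, ← keyR]; exact key
  -- integrability of `crf ^ 2`
  have hcrf_cont : Continuous crf := (contDiff_uu t1).continuous
  have hint : Integrable (fun x : ℝ => crf x ^ 2) := by
    obtain ⟨D, hD⟩ := uu_bound 0 t1
    have hD' : ∀ x, |crf x| ≤ D := by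
      intro x; have := hD x; simpa [crf] using this
    refine Integrable.mono' (((mkS t1).integrable (μ := volume)).norm.const_mul D)
      ((hcrf_cont.pow 2).aestronglyMeasurable) (Filter.Eventually.of_forall fun x => ?_)
    have hn : ‖crf x ^ 2‖ = |crf x| * |crf x| := by
      rw [Real.norm_eq_abs, abs_pow]; ring
    have hχ : ‖(mkS t1) x‖ = |crf x| := by
      rw [coe_chiS]; exact Complex.norm_real _
    rw [hn, hχ]
    exact mul_le_mul_of_nonneg_right (hD' x) (abs_nonneg _)
  have hpos : 0 < ∫ x : ℝ, crf x ^ 2 := by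
    refine (integral_pos_iff_support_of_nonneg (fun x => sq_nonneg _) hint).2 ?_
    have hopen : IsOpen {x : ℝ | crf x ≠ 0} :=
      isOpen_compl_singleton.preimage hcrf_cont
    have hmem : (1/4 : ℝ) ∈ {x : ℝ | crf x ≠ 0} := by
      simp only [Set.mem_setOf_eq, crf_quarter]
      exact Real.exp_ne_zero _
    refine lt_of_lt_of_le (hopen.measure_pos volume ⟨1/4, hmem⟩) (measure_mono ?_)
    intro x hx
    simp only [Set.mem_setOf_eq] at hx
    simp only [Function.mem_support]
    exact pow_ne_zero _ hx
  have hI : (((∫ x : ℝ, crf x ^ 2) : ℝ) : ℂ) ≠ 0 := by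
    exact_mod_cast hpos.ne'
  have hke : ke = ko := (mul_right_cancel₀ hI keyc).symm
  refine ⟨hke, fun ψ => ?_⟩
  funext x
  simp only [Pe, Po]
  rw [hke]
  ring

end
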